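/- Let 𝒪⁰ = {(u₀,u₁) ∈ ℋ^m : (u₀,u₁,0) ∈ Φ(Z_m^T)}. Then 𝒪⁰ is open in ℋ^m, the Cauchy problem □u + f(t,x,u,∇u,u̇)=0, (u,u̇)(0)=(u₀,u₁) has a solution in X_m^T if and only if (u₀,u₁) ∈ 𝒪⁰, and for each 0 ≤ t ≤ T the flow map S₀^t : 𝒪⁰ → ℋ^m, (u₀,u₁) ↦ (u(t), u̇(t)), is real-analytic. -/
import Mathlib


/-- analyticity of the flow maps `S₀^t`.
Here `H = ℋ^m`, `G = C([0,T];H^m)`, `Z = Z_m^T`, and `Φ : Z → H × G` is the analytic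
diffeomorphism `u ↦ (u(0), u̇(0), □u + F(u))` of the Cauchy problem onto its open
image (Lemma 1.3), with analytic inverse `Ψ`; `ev t : Z →L H` is `u ↦ (u(t), u̇(t))`.
A function `u ∈ Z` solves the Cauchy problem with data `p` iff `Φ u = (p, 0)`.
Then `𝒪⁰ = {p : (p,0) ∈ Φ(Z)}` is open in `ℋ^m`, the Cauchy problem with data `p`
has a solution iff `p ∈ 𝒪⁰`, and for every `t ∈ [0,T]` the flow map
`S₀^t : p ↦ ev t (Ψ (p,0))` is (real-)analytic on `𝒪⁰`. -/
theorem stmt12 {Z H G : Type*}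
    [NormedAddCommGroup Z] [NormedSpace ℝ Z] [CompleteSpace Z]
    [NormedAddCommGroup H] [NormedSpace ℝ H] [CompleteSpace H]
    [NormedAddCommGroup G] [NormedSpace ℝ G] [CompleteSpace G]
    (T : ℝ) (hT : 0 < T)
    (Φ : Z → H × G)
    (hA : AnalyticOnNhd ℝ Φ Set.univ)
    (hInj : Function.Injective Φ)
    (hOpen : IsOpen (Set.range Φ))
    (Ψ : H × G → Z)
    (hΨA : AnalyticOnNhd ℝ Ψ (Set.range Φ))
    (hΨ : ∀ z : Z, Ψ (Φ z) = z)
    (ev : ℝ → Z →L[ℝ] H) :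
    IsOpen {p : H | (p, (0 : G)) ∈ Set.range Φ} ∧
    (∀ p : H, (∃ z : Z, Φ z = (p, 0)) ↔ p ∈ {p : H | (p, (0 : G)) ∈ Set.range Φ}) ∧
    ∀ t ∈ Set.Icc (0 : ℝ) T,
      AnalyticOnNhd ℝ (fun p : H => ev t (Ψ (p, 0)))
        {p : H | (p, (0 : G)) ∈ Set.range Φ} := by
  have hι : AnalyticOnNhd ℝ (fun p : H => ((p, (0 : G)) : H × G)) Set.univ := by
    intro x _
    exact (analyticAt_id.prod analyticAt_const)
  have hpre : {p : H | (p, (0 : G)) ∈ Set.range Φ} =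
      (fun p : H => ((p, (0 : G)) : H × G)) ⁻¹' Set.range Φ := rfl
  refine ⟨?_, fun p => Iff.rfl, ?_⟩
  · rw [hpre]
    exact hOpen.preimage (Continuous.prodMk continuous_id continuous_const)
  · intro t _ p hp
    have h1 : AnalyticAt ℝ (fun p : H => ((p, (0 : G)) : H × G)) p := hι p trivial
    have h2 : AnalyticAt ℝ Ψ (p, (0 : G)) := hΨA _ hp
    have h3 : AnalyticAt ℝ (fun p : H => Ψ (p, (0 : G))) p := AnalyticAt.comp (f := fun p : H => ((p, (0 : G)) : H × G)) h2 h1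
    exact ((ev t).analyticAt _).comp h3
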